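/- With the notation of the context, for any sequence h = (h_l)_{l≥1} with each h_l ∈ {0,1}, the Neumann subgroup M_h (the stabiliser of 0 in the associated action of the modular group Γ = ⟨X, Y | X³ = Y² = 1⟩ on ℤ) is a maximal subgroup of Γ if and only if h is not the constant sequence with h_l = 0 for all l. -/

import Mathlib

namespace NeumannMaximalAux

lemma fin2 (v : Fin 2) : v = 0 ∨ v = 1 := by
  fin_cases v
  · exact Or.inl rfl
  · exact Or.inr rfl

theorem core (d : ℕ) (hd : 2 ≤ d) (h : ℕ → Fin 2) (g : ℕ → ℤ)
    (hg : ∀ l : ℕ, 1 ≤ l →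
      g l = 6 * (l : ℤ) - 5 * (∑ i ∈ Finset.Icc 1 (l - 1), ((h i : ℕ) : ℤ)) - 4)
    (y : ℤ → ℤ)
    (hy₁ : y (-1) = -1) (hy₂ : y 1 = -2)
    (hyA : ∀ l : ℕ, 1 ≤ l → h l = 0 →
      y (g l) = g l ∧ y (g l + 2) = g l + 2 ∧ y (g l + 4) = g l + 4 ∧
      y (g l + 1) = -3 * (l : ℤ) ∧ y (-3 * (l : ℤ)) = g l + 1 ∧
      y (g l + 3) = -3 * (l : ℤ) - 1 ∧ y (-3 * (l : ℤ) - 1) = g l + 3 ∧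
      y (g l + 5) = -3 * (l : ℤ) - 2 ∧ y (-3 * (l : ℤ) - 2) = g l + 5)
    (hyB : ∀ l : ℕ, 1 ≤ l → h l = 1 →
      y (-3 * (l : ℤ)) = -3 * (l : ℤ) - 1 ∧ y (-3 * (l : ℤ) - 1) = -3 * (l : ℤ) ∧
      y (g l) = -3 * (l : ℤ) - 2 ∧ y (-3 * (l : ℤ) - 2) = g l)
    (L : ℕ) (hL : 1 ≤ L) (hL1 : h L = 1)
    (WD : ∀ i j : ℤ, ((i : ZMod d) = (j : ZMod d)) → ((y i : ZMod d) = (y j : ZMod d))) :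
    False := by
  haveI : NeZero d := ⟨by omega⟩
  classical
  -- the partial-sum sequence
  set T : ℕ → ℤ := fun l => ∑ i ∈ Finset.Icc 1 (l - 1), ((h i : ℕ) : ℤ) with hT
  have hvb : ∀ l : ℕ, (0:ℤ) ≤ ((h l : ℕ) : ℤ) ∧ ((h l : ℕ) : ℤ) ≤ 1 := by
    intro l
    rcases fin2 (h l) with h0 | h0 <;> rw [h0] <;> simp
  have Trec : ∀ l : ℕ, 1 ≤ l → T (l + 1) = T l + ((h l : ℕ) : ℤ) := by
    intro l hl
    obtain ⟨l', rfl⟩ : ∃ l', l = l' + 1 := ⟨l - 1, by omega⟩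
    simp only [hT]
    rw [show l' + 1 + 1 - 1 = l' + 1 by omega, show l' + 1 - 1 = l' by omega,
      Finset.sum_Icc_succ_top (by omega)]
  have Tmono : ∀ l : ℕ, 1 ≤ l → ∀ k : ℕ, T l ≤ T (l + k) ∧ T (l + k) ≤ T l + k := by
    intro l hl k
    induction k with
    | zero => simp
    | succ n ih =>
      have := Trec (l + n) (by omega)
      have hb := hvb (l + n)
      constructor
      · calc T l ≤ T (l + n) := ih.1
        _ ≤ T (l + n + 1) := by omega
        _ = T (l + (n+1)) := by ring_nf
      · have : T (l + (n+1)) = T (l + n) + ((h (l+n) : ℕ) : ℤ) := by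
          rw [show l + (n+1) = (l + n) + 1 from rfl]; exact Trec (l+n) (by omega)
        push_cast
        omega
  have grec : ∀ l : ℕ, 1 ≤ l → g (l + 1) = g l + 6 - 5 * ((h l : ℕ) : ℤ) := by
    intro l hl
    have h1 := hg l hl
    have h2 := hg (l + 1) (by omega)
    rw [show l + 1 - 1 = (l - 1) + 1 by omega] at h2
    rw [Finset.sum_Icc_succ_top (by omega)] at h2
    rw [show l - 1 + 1 = l by omega] at h2
    push_cast at h1 h2 ⊢
    rw [h1, h2]
    ring
  have gtel : ∀ l : ℕ, 1 ≤ l → ∀ k : ℕ, g (l + k) = g l + 6 * k - 5 * (T (l + k) - T l) := by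
    intro l hl k
    induction k with
    | zero => simp
    | succ n ih =>
      have h1 : g (l + (n + 1)) = g (l + n) + 6 - 5 * ((h (l+n) : ℕ) : ℤ) := by
        rw [show l + (n+1) = (l + n) + 1 from rfl]; exact grec (l+n) (by omega)
      have h2 : T (l + (n+1)) = T (l + n) + ((h (l+n) : ℕ) : ℤ) := by
        rw [show l + (n+1) = (l + n) + 1 from rfl]; exact Trec (l+n) (by omega)
      rw [h1, ih, h2]
      push_cast
      ring
  have gstep : ∀ l : ℕ, 1 ≤ l → g l + 1 ≤ g (l + 1) := by
    intro l hl
    have := grec l hl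
    have hb := hvb l
    omega
  have gmono : ∀ l l' : ℕ, 1 ≤ l → l ≤ l' → g l ≤ g l' := by
    intro l l' hl hll'
    obtain ⟨k, rfl⟩ : ∃ k, l' = l + k := ⟨l' - l, by omega⟩
    clear hll'
    induction k with
    | zero => simp
    | succ n ih =>
      have := gstep (l + n) (by omega)
      have : g l ≤ g (l + n + 1) := by omega
      simpa [Nat.add_assoc] using this
  -- exclude d = 2
  have hd2 : d ≠ 2 := by
    intro hd2
    subst hd2
    have e := WD 1 (-1) (by decide)
    rw [hy₂, hy₁] at e
    revert e
    decide
  have hd3 : 3 ≤ d := by omega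
  have iotane : ∀ m : ℤ, 0 < m → m < (d : ℤ) → ((m : ZMod d) ≠ 0) := by
    intro m h1 h2 hc
    rw [ZMod.intCast_zmod_eq_zero_iff_dvd] at hc
    have := Int.le_of_dvd h1 hc
    omega
  -- the key single-residue comparison lemma
  have SAME : ∀ l l' : ℕ, 1 ≤ l → 1 ≤ l' →
      (((3 * (l : ℤ) : ℤ) : ZMod d) = ((3 * (l' : ℤ) : ℤ) : ZMod d)) →
      h l = h l' ∧ ((g l : ZMod d) = (g l' : ZMod d)) := by
    intro l l' hl hl' hc
    have hc0 : ((-3 * (l:ℤ) : ℤ) : ZMod d) = ((-3 * (l':ℤ) : ℤ) : ZMod d) := by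
      push_cast at hc ⊢; linear_combination -hc
    have hc1 : ((-3 * (l:ℤ) - 1 : ℤ) : ZMod d) = ((-3 * (l':ℤ) - 1 : ℤ) : ZMod d) := by
      push_cast at hc ⊢; linear_combination -hc
    have hc2 : ((-3 * (l:ℤ) - 2 : ℤ) : ZMod d) = ((-3 * (l':ℤ) - 2 : ℤ) : ZMod d) := by
      push_cast at hc ⊢; linear_combination -hc
    rcases fin2 (h l) with h0 | h1 <;> rcases fin2 (h l') with h0' | h1'
    · have e := WD _ _ hc0
      rw [(hyA l hl h0).2.2.2.2.1, (hyA l' hl' h0').2.2.2.2.1] at e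
      refine ⟨h0.trans h0'.symm, ?_⟩
      push_cast at e ⊢
      linear_combination e
    · exfalso
      have e1 := WD _ _ hc0
      rw [(hyA l hl h0).2.2.2.2.1, (hyB l' hl' h1').1] at e1
      have e2 := WD _ _ hc1
      rw [(hyA l hl h0).2.2.2.2.2.2.1, (hyB l' hl' h1').2.1] at e2
      have : ((1:ℤ) : ZMod d) = 0 := by
        push_cast at e1 e2 ⊢
        linear_combination e2 - e1
      exact iotane 1 one_pos (by exact_mod_cast (by omega : (1:ℤ) < (d:ℤ))) this
    · exfalso
      have e1 := WD _ _ hc0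
      rw [(hyB l hl h1).1, (hyA l' hl' h0').2.2.2.2.1] at e1
      have e2 := WD _ _ hc1
      rw [(hyB l hl h1).2.1, (hyA l' hl' h0').2.2.2.2.2.2.1] at e2
      have : ((1:ℤ) : ZMod d) = 0 := by
        push_cast at e1 e2 ⊢
        linear_combination e1 - e2
      exact iotane 1 one_pos (by exact_mod_cast (by omega : (1:ℤ) < (d:ℤ))) this
    · have e := WD _ _ hc2
      rw [(hyB l hl h1).2.2.2, (hyB l' hl' h1').2.2.2] at e
      exact ⟨h1.trans h1'.symm, e⟩
  by_cases h3 : 3 ∣ d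
  · -- Case II : 3 ∣ d
    obtain ⟨D, hdD⟩ := h3
    have hD1 : 1 ≤ D := by omega
    have hdDZ : (d : ℤ) = 3 * (D : ℤ) := by exact_mod_cast hdD
    have hdz0 : (((d : ℕ) : ℤ) : ZMod d) = 0 := by
      rw [ZMod.intCast_zmod_eq_zero_iff_dvd]
    have h3D0 : ((3 * (D : ℤ) : ℤ) : ZMod d) = 0 := by rw [← hdDZ]; exact hdz0
    have hcastD : ∀ l : ℕ, 1 ≤ l →
        (((3 * ((l + D : ℕ) : ℤ) : ℤ) : ZMod d) = ((3 * (l : ℤ) : ℤ) : ZMod d)) := by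
      intro l hl
      push_cast at h3D0 ⊢
      linear_combination h3D0
    have hper : ∀ l : ℕ, 1 ≤ l →
        h (l + D) = h l ∧ (((g (l + D) : ℤ) : ZMod d) = ((g l : ℤ) : ZMod d)) := by
      intro l hl
      exact SAME (l + D) l (by omega) hl (hcastD l hl)
    -- the number of ones in a window of length D is constant
    have σconst : ∀ l : ℕ, 1 ≤ l → T (l + D) - T l = T (1 + D) - T 1 := by
      intro l hl
      induction l with
      | zero => omega
      | succ n ih =>
        rcases Nat.eq_or_lt_of_le hl with h1 | h1
        · have hn0 : n = 0 := by omega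
          subst hn0
          norm_num
        · have hn1 : 1 ≤ n := by omega
          have e1 : T (n + 1 + D) = T (n + D) + ((h (n + D) : ℕ) : ℤ) := by
            rw [show n + 1 + D = (n + D) + 1 by omega]
            exact Trec (n + D) (by omega)
          have e2 := Trec n hn1
          have e3 : h (n + D) = h n := (hper n hn1).1
          have := ih hn1
          rw [e1, e2, e3]
          omega
    set sg : ℤ := T (1 + D) - T 1 with hsg
    have hsgnn : 0 ≤ sg ∧ sg ≤ (D : ℤ) := by
      have := Tmono 1 le_rfl D
      constructor <;> [omega; omega]
    have dvd5 : (d : ℤ) ∣ 5 * sg := by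
      have e := (hper 1 le_rfl).2
      have e2 := gtel 1 le_rfl D
      have e3 : ((6 * (D : ℤ) - 5 * sg : ℤ) : ZMod d) = 0 := by
        rw [e2] at e
        rw [hsg]
        push_cast at e ⊢
        linear_combination e
      rw [ZMod.intCast_zmod_eq_zero_iff_dvd] at e3
      have h6 : (d : ℤ) ∣ 6 * (D : ℤ) := ⟨2, by rw [hdDZ]; ring⟩
      have h7 := dvd_sub h6 e3
      have h8 : 6 * (D : ℤ) - (6 * (D : ℤ) - 5 * sg) = 5 * sg := by ring
      rwa [h8] at h7
    obtain ⟨k, hk⟩ := dvd5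
    have hdpos : (0 : ℤ) < (d : ℤ) := by exact_mod_cast (by omega : 0 < d)
    have hknn : 0 ≤ k := by
      by_contra hneg
      push_neg at hneg
      have h1 : (d : ℤ) * k ≤ (d : ℤ) * (-1) := mul_le_mul_of_nonneg_left (by omega) (by omega)
      linarith
    have hklt : k < 2 := by
      by_contra hge
      push_neg at hge
      have h1 : (d : ℤ) * 2 ≤ (d : ℤ) * k := mul_le_mul_of_nonneg_left hge (by omega)
      have h2 : (d : ℤ) * 2 = 6 * D := by rw [hdDZ]; ring
      linarith
    have hkcase : 5 * sg = 0 ∨ 5 * sg = (d : ℤ) := by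
      interval_cases k
      · left; omega
      · right; omega
    rcases hkcase with hk5 | hk5
    · -- no ones at all, contradiction with h L = 1
      have hσL : T (L + D) - T L = 0 := by rw [σconst L hL]; omega
      have e1 := Trec L hL
      have e2 : ((h L : ℕ) : ℤ) = 1 := by rw [hL1]; rfl
      have e3 := Tmono (L + 1) (by omega) (D - 1)
      rw [show L + 1 + (D - 1) = L + D by omega] at e3
      omega
    · -- main counting case
      have h3sg : (3 : ℤ) ∣ sg := by
        have h35 : (3 : ℤ) ∣ 5 * sg := by rw [hk5, hdDZ]; exact ⟨D, rfl⟩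
        rcases (Int.Prime.dvd_mul' (by norm_num) h35) with h5 | hok
        · norm_num at h5
        · exact hok
      have hd15 : 15 ≤ d := by
        obtain ⟨c, hc⟩ := h3sg
        have : 1 ≤ sg := by omega
        omega
      -- window and its zeros
      set WI : Finset ℕ := Finset.Icc 1 D with hWI
      set zs : Finset ℕ := WI.filter (fun l => h l = 0) with hzs
      set S : Finset (ℕ × ℕ) := zs ×ˢ ({0, 2, 4} : Finset ℕ) with hS
      have hσcard : sg + (zs.card : ℤ) = (D : ℤ) := by
        have e0 : T 1 = 0 := by
          simp only [hT]
          rw [show (1 : ℕ) - 1 = 0 from rfl, Finset.Icc_eq_empty (by omega)]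
          simp
        have e1 : T (1 + D) = ∑ i ∈ WI, ((h i : ℕ) : ℤ) := by
          simp only [hT]
          rw [show 1 + D - 1 = D by omega]
        have e2 : ∑ i ∈ WI, ((h i : ℕ) : ℤ) = ∑ i ∈ WI, (if h i = 1 then (1 : ℤ) else 0) := by
          refine Finset.sum_congr rfl (fun i _ => ?_)
          rcases fin2 (h i) with h0 | h0 <;> rw [h0] <;> simp
        have e3 : ∑ i ∈ WI, (if h i = 1 then (1 : ℤ) else 0)
            = ((WI.filter (fun i => h i = 1)).card : ℤ) := Finset.sum_boole _ _
        have e4 : (WI.filter (fun i => h i = 1)).card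
            + (WI.filter (fun i => ¬(h i = 1))).card = WI.card :=
          Finset.card_filter_add_card_filter_not _
        have e5 : WI.filter (fun i => ¬(h i = 1)) = zs := by
          rw [hzs]
          refine Finset.filter_congr (fun i _ => ?_)
          rcases fin2 (h i) with h0 | h0 <;> rw [h0] <;> simp
        have e6 : WI.card = D := by rw [hWI, Nat.card_Icc]; omega
        rw [hsg, e0, e1, e2, e3]
        rw [e5, e6] at e4
        push_cast
        omega
      -- membership unpacking
      have hmem : ∀ p : ℕ × ℕ, p ∈ S →
          (1 ≤ p.1 ∧ p.1 ≤ D ∧ h p.1 = 0) ∧ (p.2 = 0 ∨ p.2 = 2 ∨ p.2 = 4) := by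
        rintro ⟨l, e⟩ hp
        rw [hS, Finset.mem_product] at hp
        obtain ⟨hpl, hpe⟩ := hp
        rw [hzs, Finset.mem_filter, hWI, Finset.mem_Icc] at hpl
        simp only [Finset.mem_insert, Finset.mem_singleton] at hpe
        exact ⟨⟨hpl.1.1, hpl.1.2, hpl.2⟩, hpe⟩
      -- bounds on the positive points
      have hbnd : ∀ p : ℕ × ℕ, p ∈ S →
          g 1 ≤ g p.1 + (p.2 : ℤ) ∧ g p.1 + (p.2 : ℤ) + 2 ≤ g 1 + (d : ℤ) := by
        rintro ⟨l, e⟩ hp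
        obtain ⟨⟨hl1, hlD, hl0⟩, hpe⟩ := hmem _ hp
        dsimp only at hl1 hlD hl0 hpe
        have he4 : (0 : ℤ) ≤ (e : ℤ) ∧ (e : ℤ) ≤ 4 := by
          rcases hpe with rfl | rfl | rfl <;> norm_num
        have h1 : g 1 ≤ g l := gmono 1 l le_rfl hl1
        have h2 : g (l + 1) = g l + 6 := by
          have := grec l hl1
          rw [hl0] at this
          simpa using this
        have h3 : g (l + 1) ≤ g (1 + D) := gmono (l + 1) (1 + D) (by omega) (by omega)
        have h4 : g (1 + D) = g 1 + (d : ℤ) := by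
          have e2 := gtel 1 le_rfl D
          rw [← hsg] at e2
          rw [e2]
          linarith [hk5, hdDZ]
        dsimp only
        constructor <;> linarith
      -- the key assignment
      have key : ∀ p : ℕ × ℕ, p ∈ S → ∃ mN : ℕ, (D ≤ mN ∧ mN < 2 * D) ∧ ∃ j : ℤ,
          (((-3 * ((mN : ℕ) : ℤ) - j : ℤ) : ZMod d) = ((g p.1 + (p.2 : ℤ) : ℤ) : ZMod d)) ∧
          ((j = 0 ∧ h mN = 0 ∧ ((g mN : ZMod d) = ((-3 * ((mN : ℕ) : ℤ) - 1 : ℤ) : ZMod d))) ∨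
           (j = 1 ∧ h mN = 0 ∧ ((g mN : ZMod d) = ((-3 * ((mN : ℕ) : ℤ) - 4 : ℤ) : ZMod d))) ∨
           (j = 2 ∧ ((h mN = 1 ∧ ((g mN : ZMod d) = ((-3 * ((mN : ℕ) : ℤ) - 2 : ℤ) : ZMod d))) ∨
                     (h mN = 0 ∧ ((g mN : ZMod d) = ((-3 * ((mN : ℕ) : ℤ) - 7 : ℤ) : ZMod d)))))) := by
        rintro ⟨l, e⟩ hp
        obtain ⟨⟨hl1, hlD, hl0⟩, hpe⟩ := hmem _ hp
        dsimp only at hl1 hlD hl0 hpe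
        set ρ : ℤ := g l + (e : ℤ) with hρ
        set j : ℤ := (-ρ) % 3 with hj
        have hjb : 0 ≤ j ∧ j < 3 :=
          ⟨Int.emod_nonneg _ (by norm_num), Int.emod_lt_of_pos _ (by norm_num)⟩
        have h3ρ : (3 : ℤ) ∣ ρ + j := by
          have h1 : (3 : ℤ) ∣ (-ρ) - j := Int.dvd_self_sub_of_emod_eq rfl
          have h2 : ρ + j = -((-ρ) - j) := by ring
          rw [h2]
          exact dvd_neg.mpr h1
        set s : ℤ := (ρ + j) / 3 with hs
        have h3s : 3 * s = ρ + j := Int.mul_ediv_cancel' h3ρ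
        set m : ℤ := (-s) % (D : ℤ) + (D : ℤ) with hm
        have hDz : ((D : ℤ)) ≠ 0 := by omega
        have hmb : (D : ℤ) ≤ m ∧ m < 2 * (D : ℤ) := by
          constructor
          · have := Int.emod_nonneg (-s) hDz
            omega
          · have := Int.emod_lt_of_pos (-s) (by omega : (0 : ℤ) < (D : ℤ))
            omega
        refine ⟨m.toNat, ⟨by omega, by omega⟩, j, ?_⟩
        have hmN : ((m.toNat : ℕ) : ℤ) = m := Int.toNat_of_nonneg (by omega)
        have hmN1 : 1 ≤ m.toNat := by omega
        have hcast : ((-3 * m - j : ℤ) : ZMod d) = ((ρ : ℤ) : ZMod d) := by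
          have hdvd : (d : ℤ) ∣ ρ - (-3 * m - j) := by
            refine ⟨-((-s) / (D : ℤ)) + 1, ?_⟩
            have he := Int.emod_def (-s) (D : ℤ)
            rw [hdDZ, hm, he]
            linear_combination -h3s
          rw [ZMod.intCast_eq_intCast_iff]
          exact Int.modEq_iff_dvd.mpr hdvd
        have hyρ : y ρ = ρ := by
          have hA := hyA l hl1 hl0
          rcases hpe with rfl | rfl | rfl
          · simpa [hρ] using hA.1
          · simpa [hρ] using hA.2.1
          · simpa [hρ] using hA.2.2.1
        have hWD := WD _ _ hcast
        rw [hyρ] at hWD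
        rw [← hmN] at hcast hWD
        constructor
        · exact hcast
        have hj3 : j = 0 ∨ j = 1 ∨ j = 2 := by omega
        have hne1 : ((1 : ℤ) : ZMod d) ≠ 0 := iotane 1 (by norm_num) (by exact_mod_cast (by omega : (1:ℤ) < (d:ℤ)))
        rcases hj3 with hj0 | hj1 | hj2 <;> rcases fin2 (h m.toNat) with hm0 | hm1
        · -- j = 0, h = 0
          left
          refine ⟨hj0, hm0, ?_⟩
          rw [hj0, sub_zero] at hWD
          rw [(hyA m.toNat hmN1 hm0).2.2.2.2.1] at hWD
          rw [hj0] at hcast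
          push_cast at hWD hcast ⊢
          linear_combination hWD - hcast
        · -- j = 0, h = 1 : contradiction
          exfalso
          rw [hj0, sub_zero] at hWD
          rw [(hyB m.toNat hmN1 hm1).1] at hWD
          rw [hj0] at hcast
          apply hne1
          push_cast at hWD hcast ⊢
          linear_combination hcast - hWD
        · -- j = 1, h = 0
          right; left
          refine ⟨hj1, hm0, ?_⟩
          rw [hj1] at hWD hcast
          rw [(hyA m.toNat hmN1 hm0).2.2.2.2.2.2.1] at hWD
          push_cast at hWD hcast ⊢
          linear_combination hWD - hcast
        · -- j = 1, h = 1 : contradiction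
          exfalso
          rw [hj1] at hWD hcast
          rw [(hyB m.toNat hmN1 hm1).2.1] at hWD
          apply hne1
          push_cast at hWD hcast ⊢
          linear_combination hWD - hcast
        · -- j = 2, h = 0
          right; right
          refine ⟨hj2, Or.inr ⟨hm0, ?_⟩⟩
          rw [hj2] at hWD hcast
          rw [(hyA m.toNat hmN1 hm0).2.2.2.2.2.2.2.2] at hWD
          push_cast at hWD hcast ⊢
          linear_combination hWD - hcast
        · -- j = 2, h = 1
          right; right
          refine ⟨hj2, Or.inl ⟨hm1, ?_⟩⟩
          rw [hj2] at hWD hcast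
          rw [(hyB m.toNat hmN1 hm1).2.2.2] at hWD
          push_cast at hWD hcast ⊢
          linear_combination hWD - hcast
      choose ΦF hΦ1 hΦ2 using key
      set Φ : ℕ × ℕ → ℕ := fun p => if hp : p ∈ S then ΦF p hp else 0 with hΦ
      have hΦeq : ∀ p (hp : p ∈ S), Φ p = ΦF p hp := by
        intro p hp
        rw [hΦ]
        simp [hp]
      have hmaps : ∀ p ∈ S, Φ p ∈ Finset.Ico D (2 * D) := by
        intro p hp
        rw [hΦeq p hp, Finset.mem_Ico]
        exact ⟨(hΦ1 p hp).1, (hΦ1 p hp).2⟩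
      have hinj : Set.InjOn Φ ↑S := by
        intro p hp' q hq' hpq
        have hp : p ∈ S := hp'
        have hq : q ∈ S := hq'
        rw [hΦeq p hp, hΦeq q hq] at hpq
        obtain ⟨j₁, hc₁, hP₁⟩ := hΦ2 p hp
        obtain ⟨j₂, hc₂, hP₂⟩ := hΦ2 q hq
        rw [hpq] at hc₁ hP₁
        set m := ΦF q hq with hmdef
        have hne : ∀ a : ℤ, 0 < a → a < (d : ℤ) → ((g m : ZMod d) = ((-3 * ((m : ℕ) : ℤ) - 1 : ℤ) : ZMod d)) → True := fun _ _ _ _ => trivial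
        -- j₁ = j₂ by exhausting cases
        have hj12 : j₁ = j₂ := by
          have hne3 : ((3 : ℤ) : ZMod d) ≠ 0 := iotane 3 (by norm_num) (by exact_mod_cast (by omega : (3:ℤ) < (d:ℤ)))
          have hne6 : ((6 : ℤ) : ZMod d) ≠ 0 := iotane 6 (by norm_num) (by exact_mod_cast (by omega : (6:ℤ) < (d:ℤ)))
          have hne2 : ((2 : ℤ) : ZMod d) ≠ 0 := iotane 2 (by norm_num) (by exact_mod_cast (by omega : (2:ℤ) < (d:ℤ)))
          have hne5 : ((5 : ℤ) : ZMod d) ≠ 0 := iotane 5 (by norm_num) (by exact_mod_cast (by omega : (5:ℤ) < (d:ℤ)))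
          have hne01 : (0 : Fin 2) ≠ 1 := by decide
          have hfin01 : ∀ a b : Fin 2, a = 0 → a = 1 → b = b → False := by
            intro a b h0 h1 _
            rw [h0] at h1
            exact absurd h1 (by decide)
          rcases hP₁ with ⟨hj, hh, he⟩ | ⟨hj, hh, he⟩ | ⟨hj, hh⟩ <;>
            rcases hP₂ with ⟨hj', hh', he'⟩ | ⟨hj', hh', he'⟩ | ⟨hj', hh'⟩
          · rw [hj, hj']
          · exfalso; apply hne3
            push_cast at he he' ⊢
            first
            | linear_combination he - he'
            | linear_combination he' - he
          · rcases hh' with ⟨hh1, he'⟩ | ⟨hh0, he'⟩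
            · exact absurd (hh.symm.trans hh1) (by decide)
            · exfalso; apply hne6
              push_cast at he he' ⊢
              first
              | linear_combination he - he'
              | linear_combination he' - he
          · exfalso; apply hne3
            push_cast at he he' ⊢
            first
            | linear_combination he - he'
            | linear_combination he' - he
          · rw [hj, hj']
          · rcases hh' with ⟨hh1, he'⟩ | ⟨hh0, he'⟩
            · exact absurd (hh.symm.trans hh1) (by decide)
            · exfalso; apply hne3
              push_cast at he he' ⊢
              first
              | linear_combination he - he'
              | linear_combination he' - he
          · rcases hh with ⟨hh1, he⟩ | ⟨hh0, he⟩
            · exact absurd (hh'.symm.trans hh1) (by decide)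
            · exfalso; apply hne6
              push_cast at he he' ⊢
              first
              | linear_combination he - he'
              | linear_combination he' - he
          · rcases hh with ⟨hh1, he⟩ | ⟨hh0, he⟩
            · exact absurd (hh'.symm.trans hh1) (by decide)
            · exfalso; apply hne3
              push_cast at he he' ⊢
              first
              | linear_combination he - he'
              | linear_combination he' - he
          · rw [hj, hj']
        rw [hj12] at hc₁
        have hρeq : ((g p.1 + (p.2 : ℤ) : ℤ) : ZMod d) = ((g q.1 + (q.2 : ℤ) : ℤ) : ZMod d) := by
          rw [← hc₁, ← hc₂]
        have hdvd : (d : ℤ) ∣ (g q.1 + (q.2 : ℤ)) - (g p.1 + (p.2 : ℤ)) := by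
          rw [ZMod.intCast_eq_intCast_iff] at hρeq
          exact Int.ModEq.dvd hρeq
        obtain ⟨c, hcc⟩ := hdvd
        have hb1 := hbnd p hp
        have hb2 := hbnd q hq
        have hc0 : c = 0 := by
          rcases lt_trichotomy c 0 with hlt | h0 | hgt
          · exfalso
            have h1 : (d : ℤ) * c ≤ (d : ℤ) * (-1) := mul_le_mul_of_nonneg_left (by omega) (by omega)
            linarith
          · exact h0
          · exfalso
            have h1 : (d : ℤ) * 1 ≤ (d : ℤ) * c := mul_le_mul_of_nonneg_left (by omega) (by omega)
            linarith
        have hρZ : g p.1 + (p.2 : ℤ) = g q.1 + (q.2 : ℤ) := by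
          rw [hc0, mul_zero] at hcc
          linarith
        obtain ⟨⟨hl1p, hlDp, h0p⟩, hep⟩ := hmem p hp
        obtain ⟨⟨hl1q, hlDq, h0q⟩, heq⟩ := hmem q hq
        have hep4 : (0:ℤ) ≤ (p.2 : ℤ) ∧ (p.2 : ℤ) ≤ 4 := by rcases hep with h|h|h <;> rw [h] <;> norm_num
        have heq4 : (0:ℤ) ≤ (q.2 : ℤ) ∧ (q.2 : ℤ) ≤ 4 := by rcases heq with h|h|h <;> rw [h] <;> norm_num
        have hl12 : p.1 = q.1 := by
          rcases lt_trichotomy p.1 q.1 with hlt | h0 | hgt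
          · exfalso
            have e2 : g (p.1 + 1) = g p.1 + 6 := by
              have := grec p.1 hl1p
              rw [h0p] at this
              simpa using this
            have e3 : g (p.1 + 1) ≤ g q.1 := gmono _ _ (by omega) (by omega)
            linarith
          · exact h0
          · exfalso
            have e2 : g (q.1 + 1) = g q.1 + 6 := by
              have := grec q.1 hl1q
              rw [h0q] at this
              simpa using this
            have e3 : g (q.1 + 1) ≤ g p.1 := gmono _ _ (by omega) (by omega)
            linarith
        have hl22 : p.2 = q.2 := by
          rw [hl12] at hρZ
          omega
        exact Prod.ext hl12 hl22
      have hcard := Finset.card_le_card_of_injOn Φ hmaps hinj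
      have hcardS : S.card = zs.card * 3 := by
        rw [hS, Finset.card_product]
        norm_num
      have hcardI : (Finset.Ico D (2 * D)).card = D := by
        rw [Nat.card_Ico]
        omega
      rw [hcardS, hcardI] at hcard
      omega
  · -- Case I : ¬ 3 ∣ d
    have hcop : Nat.Coprime 3 d := (Nat.prime_three.coprime_iff_not_dvd).mpr h3
    have hunit : IsUnit ((3 : ℕ) : ZMod d) := (ZMod.isUnit_iff_coprime 3 d).mpr hcop
    obtain ⟨u, hu⟩ := hunit
    set t : ZMod d := -(↑u⁻¹) with htdef
    have ht : (3 : ZMod d) * t + 1 = 0 := by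
      have h1 : (↑u : ZMod d) * ↑u⁻¹ = 1 := u.mul_inv
      rw [hu] at h1
      rw [htdef]
      push_cast at h1 ⊢
      linear_combination -h1
    set rep : ZMod d → ℕ := fun c => c.val + d with hrepdef
    have hrep1 : ∀ c : ZMod d, 1 ≤ rep c := by
      intro c
      show 1 ≤ c.val + d
      omega
    have hrepc : ∀ c : ZMod d, ((rep c : ℕ) : ZMod d) = c := by
      intro c
      have h1 : ((c.val : ℕ) : ZMod d) = c := ZMod.natCast_rightInverse c
      show (((c.val + d : ℕ) : ℕ) : ZMod d) = c
      push_cast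
      rw [h1, ZMod.natCast_self]
      ring
    have hif0 : ∀ x y : ZMod d, (if (0 : Fin 2) = 1 then x else y) = y :=
      fun x y => if_neg (by decide)
    have hif1 : ∀ x y : ZMod d, (if (1 : Fin 2) = 1 then x else y) = x :=
      fun x y => if_pos rfl
    have hne2 : ((2 : ℤ) : ZMod d) ≠ 0 :=
      iotane 2 (by norm_num) (by exact_mod_cast (by omega : (2:ℤ) < (d:ℤ)))
    -- the shift relation
    have REL : ∀ l l' : ℕ, 1 ≤ l → 1 ≤ l' →
        (((3 * (l' : ℤ) + 1 : ℤ) : ZMod d) = ((3 * (l : ℤ) : ℤ) : ZMod d)) →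
        (¬(h l = 1 ∧ h l' = 1)) ∧
        (if h l' = 1 then (-2 : ZMod d) else ((g l' + 3 * (l' : ℤ) : ℤ) : ZMod d))
          = (if h l = 1 then (-2 : ZMod d) else ((g l + 3 * (l : ℤ) : ℤ) : ZMod d)) - 3
            + (if h l' = 1 then (1 : ZMod d) else 0) := by
      intro l l' hl hl' hc
      have hcpt : ((-3 * (l : ℤ) : ℤ) : ZMod d) = ((-3 * (l' : ℤ) - 1 : ℤ) : ZMod d) := by
        push_cast at hc ⊢
        linear_combination hc
      have e := WD _ _ hcpt
      rcases fin2 (h l) with h0 | h1 <;> rcases fin2 (h l') with h0' | h1'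
      · -- (0,0)
        rw [(hyA l hl h0).2.2.2.2.1, (hyA l' hl' h0').2.2.2.2.2.2.1] at e
        refine ⟨fun hco => absurd (h0.symm.trans hco.1) (by decide), ?_⟩
        simp only [h0, h0', hif0, hif1]
        push_cast at e hc ⊢
        first
        | linear_combination -e + hc
        | linear_combination e - hc
        | linear_combination e + hc
        | linear_combination -e - hc
      · -- (0,1)
        rw [(hyA l hl h0).2.2.2.2.1, (hyB l' hl' h1').2.1] at e
        refine ⟨fun hco => absurd (h0.symm.trans hco.1) (by decide), ?_⟩
        simp only [h0, h1', hif0, hif1]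
        push_cast at e hc ⊢
        first
        | linear_combination -e + hc
        | linear_combination e - hc
        | linear_combination e + hc
        | linear_combination -e - hc
      · -- (1,0)
        rw [(hyB l hl h1).1, (hyA l' hl' h0').2.2.2.2.2.2.1] at e
        refine ⟨fun hco => absurd (h0'.symm.trans hco.2) (by decide), ?_⟩
        simp only [h1, h0', hif0, hif1]
        push_cast at e hc ⊢
        first
        | linear_combination -e + hc
        | linear_combination e - hc
        | linear_combination e + hc
        | linear_combination -e - hc
      · -- (1,1) : impossible
        exfalso
        rw [(hyB l hl h1).1, (hyB l' hl' h1').2.1] at e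
        apply hne2
        push_cast at e hc ⊢
        first
        | linear_combination -e + hc
        | linear_combination e - hc
        | linear_combination e + hc
        | linear_combination -e - hc
    -- index-congruence lemma
    have hEq : ∀ l l' : ℕ, 1 ≤ l → 1 ≤ l' → ((l : ZMod d) = (l' : ZMod d)) →
        h l = h l' := by
      intro l l' hl hl' hc
      refine (SAME l l' hl hl' ?_).1
      push_cast
      rw [hc]
    set W : ZMod d → ZMod d := fun c =>
      if h (rep c) = 1 then (-2 : ZMod d)
      else ((g (rep c) + 3 * ((rep c : ℕ) : ℤ) : ℤ) : ZMod d) with hWdef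
    have hshift : ∀ c : ZMod d,
        (((3 * ((rep (c + t) : ℕ) : ℤ) + 1 : ℤ) : ZMod d)
          = ((3 * ((rep c : ℕ) : ℤ) : ℤ) : ZMod d)) := by
      intro c
      push_cast
      rw [hrepc, hrepc]
      linear_combination ht
    have keyW : ∀ c : ZMod d,
        W (c + t) = W c - 3 + (if h (rep (c + t)) = 1 then (1 : ZMod d) else 0) := by
      intro c
      simp only [hWdef]
      exact (REL (rep c) (rep (c + t)) (hrep1 _) (hrep1 _) (hshift c)).2
    have hsum1 : ∑ c : ZMod d, W (c + t) = ∑ c : ZMod d, W c :=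
      Fintype.sum_equiv (Equiv.addRight t) (fun c => W (c + t)) W (fun c => rfl)
    have hsum2 : ∑ c : ZMod d, W (c + t)
        = ∑ c : ZMod d, (W c - 3 + (if h (rep (c + t)) = 1 then (1 : ZMod d) else 0)) :=
      Finset.sum_congr rfl (fun c _ => keyW c)
    have hsum3 : ∑ c : ZMod d, (if h (rep (c + t)) = 1 then (1 : ZMod d) else 0)
        = ∑ c : ZMod d, (if h (rep c) = 1 then (1 : ZMod d) else 0) :=
      Fintype.sum_equiv (Equiv.addRight t)
        (fun c => if h (rep (c + t)) = 1 then (1 : ZMod d) else 0)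
        (fun c => if h (rep c) = 1 then (1 : ZMod d) else 0) (fun c => rfl)
    have hsum4 : ∑ c : ZMod d, (if h (rep c) = 1 then (1 : ZMod d) else 0)
        = (((Finset.univ.filter (fun c : ZMod d => h (rep c) = 1)).card : ℕ) : ZMod d) :=
      Finset.sum_boole _ _
    set ct : ℕ := (Finset.univ.filter (fun c : ZMod d => h (rep c) = 1)).card with hct
    have hct0 : ((ct : ℕ) : ZMod d) = 0 := by
      have e1 : ∑ c : ZMod d, (W c - 3 + (if h (rep (c + t)) = 1 then (1 : ZMod d) else 0))
          = ∑ c : ZMod d, W c - ∑ _c : ZMod d, (3 : ZMod d)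
            + ∑ c : ZMod d, (if h (rep (c + t)) = 1 then (1 : ZMod d) else 0) := by
        rw [Finset.sum_add_distrib, Finset.sum_sub_distrib]
      have e2 : ∑ _c : ZMod d, (3 : ZMod d) = 0 := by
        rw [Finset.sum_const, Finset.card_univ, ZMod.card]
        rw [nsmul_eq_mul, ZMod.natCast_self, zero_mul]
      rw [hsum2, e1, e2, hsum3, hsum4] at hsum1
      linear_combination hsum1
    have hdvdct : d ∣ ct := by rwa [ZMod.natCast_eq_zero_iff] at hct0
    have hctpos : 0 < ct := by
      have hmemL : ((L : ℕ) : ZMod d) ∈ Finset.univ.filter (fun c : ZMod d => h (rep c) = 1) := by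
        rw [Finset.mem_filter]
        refine ⟨Finset.mem_univ _, ?_⟩
        have e := hEq (rep ((L : ℕ) : ZMod d)) L (hrep1 _) hL (by rw [hrepc])
        rw [e, hL1]
      have := Finset.card_pos.mpr ⟨_, hmemL⟩
      omega
    have hall : ∀ c : ZMod d, h (rep c) = 1 := by
      have hctle : ct ≤ d := by
        have := Finset.card_filter_le (Finset.univ : Finset (ZMod d))
          (fun c : ZMod d => h (rep c) = 1)
        rwa [Finset.card_univ, ZMod.card] at this
      have hdle : d ≤ ct := Nat.le_of_dvd hctpos hdvdct
      have hcteq : ct = d := by omega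
      have huniv := Finset.eq_univ_of_card
        (Finset.univ.filter (fun c : ZMod d => h (rep c) = 1))
        (by rw [← hct, hcteq, ZMod.card])
      intro c
      have hc : c ∈ Finset.univ.filter (fun c : ZMod d => h (rep c) = 1) := by
        rw [huniv]
        exact Finset.mem_univ c
      exact (Finset.mem_filter.mp hc).2
    exact (REL (rep 0) (rep (0 + t)) (hrep1 _) (hrep1 _) (hshift 0)).1 ⟨hall 0, hall (0 + t)⟩

end NeumannMaximalAux




def triangleRels (p q : ℕ) : Set (FreeGroup (Fin 2)) :=
  {FreeGroup.of 0 ^ p, FreeGroup.of 1 ^ q}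

/-- The triangle group Δ(p,q,∞) = ⟨X, Y ∣ X^p = Y^q = 1⟩ ≅ C_p * C_q. -/
abbrev Tri (p q : ℕ) : Type := PresentedGroup (triangleRels p q)

def triX (p q : ℕ) : Tri p q := PresentedGroup.of 0
def triY (p q : ℕ) : Tri p q := PresentedGroup.of 1
def triZ (p q : ℕ) : Tri p q := (triX p q * triY p q)⁻¹

/-- An element is parabolic if it is conjugate to a nonzero power of Z. -/
def IsParabolic {p q : ℕ} (g : Tri p q) : Prop :=
  ∃ (k : ℤ) (c : Tri p q), k ≠ 0 ∧ g = c * (triZ p q) ^ k * c⁻¹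

/-- A subgroup is nonparabolic if it contains no parabolic element. -/
def Nonparabolic {p q : ℕ} (M : Subgroup (Tri p q)) : Prop :=
  ∀ g ∈ M, ¬ IsParabolic g

/-- A Neumann subgroup: a complement to P = ⟨Z⟩, i.e. M ∩ P = 1 and MP = Γ. -/
def IsNeumann {p q : ℕ} (M : Subgroup (Tri p q)) : Prop :=
  M ⊓ Subgroup.zpowers (triZ p q) = ⊥ ∧
  ∀ g : Tri p q, ∃ m ∈ M, ∃ k : ℤ, g = m * (triZ p q) ^ k

/-- Conjugacy of subgroups (restricted to those satisfying a property `P`). -/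
def conjRel {G : Type*} [Group G] (P : Subgroup G → Prop)
    (M N : {M : Subgroup G // P M}) : Prop :=
  ∃ g : G, (N : Subgroup G) = Subgroup.map (MulAut.conj g).toMonoidHom (M : Subgroup G)

/-- Neumann's construction: given a 0-1 sequence `h` (indexed from 1), with the
associated sequence `g`, the permutation `y` of ℤ determined by the listed rules,
the translation `z : i ↦ i + 1`, and the resulting action `φ` of the modular group
Γ = Δ(3,2,∞) on ℤ (with Y ↦ y and Z ↦ z), the Neumann subgroup M_h — the stabiliser
of 0 — is a maximal subgroup of Γ if and only if `h` is not identically 0. -/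
theorem neumann_Mh_maximal_iff (h : ℕ → Fin 2) (g : ℕ → ℤ)
    (hg : ∀ l : ℕ, 1 ≤ l →
      g l = 6 * (l : ℤ) - 5 * (∑ i ∈ Finset.Icc 1 (l - 1), ((h i : ℕ) : ℤ)) - 4)
    (y z : Equiv.Perm ℤ)
    (hy₀ : y 0 = 0) (hy₁ : y (-1) = -1) (hy₂ : y 1 = -2) (hy₃ : y (-2) = 1)
    (hyA : ∀ l : ℕ, 1 ≤ l → h l = 0 →
      y (g l) = g l ∧ y (g l + 2) = g l + 2 ∧ y (g l + 4) = g l + 4 ∧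
      y (g l + 1) = -3 * (l : ℤ) ∧ y (-3 * (l : ℤ)) = g l + 1 ∧
      y (g l + 3) = -3 * (l : ℤ) - 1 ∧ y (-3 * (l : ℤ) - 1) = g l + 3 ∧
      y (g l + 5) = -3 * (l : ℤ) - 2 ∧ y (-3 * (l : ℤ) - 2) = g l + 5)
    (hyB : ∀ l : ℕ, 1 ≤ l → h l = 1 →
      y (-3 * (l : ℤ)) = -3 * (l : ℤ) - 1 ∧ y (-3 * (l : ℤ) - 1) = -3 * (l : ℤ) ∧
      y (g l) = -3 * (l : ℤ) - 2 ∧ y (-3 * (l : ℤ) - 2) = g l)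
    (hz : ∀ i : ℤ, z i = i + 1)
    (φ : Tri 3 2 →* Equiv.Perm ℤ)
    (hφY : φ (triY 3 2) = y) (hφZ : φ (triZ 3 2) = z)
    (htrans : ∀ s t : ℤ, ∃ w : Tri 3 2, φ w s = t) :
    IsCoatom (Subgroup.comap φ (MulAction.stabilizer (Equiv.Perm ℤ) (0 : ℤ)))
      ↔ ¬ (∀ l : ℕ, 1 ≤ l → h l = 0) := by
  classical
  set M := Subgroup.comap φ (MulAction.stabilizer (Equiv.Perm ℤ) (0 : ℤ)) with hM
  have memM : ∀ w : Tri 3 2, w ∈ M ↔ φ w 0 = 0 := by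
    intro w
    rw [hM, Subgroup.mem_comap, MulAction.mem_stabilizer_iff, Equiv.Perm.smul_def]
  have hzinv : ∀ i : ℤ, z⁻¹ i = i - 1 := by
    intro i
    apply z.injective
    rw [Equiv.Perm.inv_def, Equiv.apply_symm_apply, hz]
    ring
  have hz' : ∀ (k : ℤ) (i : ℤ), (z ^ k) i = i + k := by
    intro k
    induction k using Int.induction_on with
    | zero => intro i; simp
    | succ n ih =>
      intro i
      rw [zpow_add_one, Equiv.Perm.mul_apply, hz, ih]
      ring
    | pred n ih =>
      intro i
      rw [zpow_sub_one, Equiv.Perm.mul_apply, hzinv, ih]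
      push_cast
      ring
  have hzpow : ∀ (k : ℤ) (i : ℤ), (φ (triZ 3 2 ^ k)) i = i + k := by
    intro k i
    rw [map_zpow, hφZ]
    exact hz' k i
  constructor
  · -- maximal → not identically zero
    intro hco hall
    have hg0 : ∀ l : ℕ, 1 ≤ l → g l = 6 * l - 4 := by
      intro l hl
      rw [hg l hl]
      have hzero : ∑ i ∈ Finset.Icc 1 (l - 1), ((h i : ℕ) : ℤ) = 0 := by
        apply Finset.sum_eq_zero
        intro i hi
        rw [Finset.mem_Icc] at hi
        rw [hall i hi.1]
        rfl
      rw [hzero]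
      ring
    have K : ∀ i : ℤ, (3 : ℤ) ∣ y i - i := by
      intro i
      rcases le_or_gt 2 i with hi | hi
      · obtain ⟨n, hn⟩ : ∃ n : ℕ, i = (n : ℤ) + 2 := ⟨(i - 2).toNat, by omega⟩
        obtain ⟨l, e, hl1, he6, hie⟩ : ∃ l e : ℕ, 1 ≤ l ∧ e < 6 ∧ i = g l + e := by
          refine ⟨n / 6 + 1, n % 6, by omega, by omega, ?_⟩
          rw [hg0 _ (by omega)]
          push_cast
          omega
        have hA := hyA l hl1 (hall l hl1)
        interval_cases e
        · have hie' : i = g l := by push_cast at hie; linarith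
          rw [hie', hA.1]
          simp
        · have hie' : i = g l + 1 := by push_cast at hie; linarith
          rw [hie', hA.2.2.2.1, hg0 l hl1]
          exact ⟨-3 * l + 1, by ring⟩
        · have hie' : i = g l + 2 := by push_cast at hie; linarith
          rw [hie', hA.2.1]
          simp
        · have hie' : i = g l + 3 := by push_cast at hie; linarith
          rw [hie', hA.2.2.2.2.2.1, hg0 l hl1]
          exact ⟨-3 * l, by ring⟩
        · have hie' : i = g l + 4 := by push_cast at hie; linarith
          rw [hie', hA.2.2.1]
          simp
        · have hie' : i = g l + 5 := by push_cast at hie; linarith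
          rw [hie', hA.2.2.2.2.2.2.2.1, hg0 l hl1]
          exact ⟨-3 * l - 1, by ring⟩
      rcases lt_or_ge i (-2) with hi2 | hi2
      · obtain ⟨n, hn⟩ : ∃ n : ℕ, i = -(n : ℤ) - 3 := ⟨(-i - 3).toNat, by omega⟩
        obtain ⟨l, j, hl1, hj3, hij⟩ : ∃ l j : ℕ, 1 ≤ l ∧ j < 3 ∧ i = -3 * l - j := by
          refine ⟨n / 3 + 1, n % 3, by omega, by omega, ?_⟩
          push_cast
          omega
        have hA := hyA l hl1 (hall l hl1)
        interval_cases j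
        · have hij' : i = -3 * (l : ℤ) := by push_cast at hij; linarith
          rw [hij', hA.2.2.2.2.1, hg0 l hl1]
          exact ⟨3 * l - 1, by ring⟩
        · have hij' : i = -3 * (l : ℤ) - 1 := by push_cast at hij; linarith
          rw [hij', hA.2.2.2.2.2.2.1, hg0 l hl1]
          exact ⟨3 * l, by ring⟩
        · have hij' : i = -3 * (l : ℤ) - 2 := by push_cast at hij; linarith
          rw [hij', hA.2.2.2.2.2.2.2.2, hg0 l hl1]
          exact ⟨3 * l + 1, by ring⟩
      · interval_cases i
        · rw [hy₃]; decide
        · rw [hy₁]; decide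
        · rw [hy₀]; decide
        · rw [hy₂]; decide
    have mod3 : ∀ a b : ℤ, ((a : ZMod 3) = (b : ZMod 3)) ↔ (3 : ℤ) ∣ b - a := by
      intro a b
      rw [ZMod.intCast_eq_intCast_iff, Int.modEq_iff_dvd]
      norm_num
    let H : Subgroup (Equiv.Perm ℤ) :=
      { carrier := {σ : Equiv.Perm ℤ |
          ∀ i k : ℤ, ((i : ZMod 3) = (k : ZMod 3)) ↔ ((σ i : ZMod 3) = (σ k : ZMod 3))}
        one_mem' := by intro i k; rfl
        mul_mem' := by
          intro a b ha hb i k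
          have h1 := hb i k
          have h2 := ha (b i) (b k)
          rw [Equiv.Perm.mul_apply, Equiv.Perm.mul_apply]
          exact h1.trans h2
        inv_mem' := by
          intro a ha i k
          have := ha (a⁻¹ i) (a⁻¹ k)
          rw [Equiv.Perm.inv_def, Equiv.apply_symm_apply, Equiv.apply_symm_apply] at this
          rw [Equiv.Perm.inv_def]
          exact this.symm }
    have hyH : y ∈ H := by
      intro i k
      rw [mod3, mod3]
      have h1 := K i
      have h2 := K k
      omega
    have hzH : z ∈ H := by
      intro i k
      rw [mod3, mod3, hz, hz]
      omega
    have hwH : ∀ wel : Tri 3 2, φ wel ∈ H := by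
      have hle : Subgroup.closure (Set.range (PresentedGroup.of : Fin 2 → Tri 3 2))
          ≤ Subgroup.comap φ H := by
        rw [Subgroup.closure_le]
        rintro x ⟨i, rfl⟩
        simp only [SetLike.mem_coe, Subgroup.mem_comap]
        fin_cases i
        · have h1 : (triZ 3 2)⁻¹ = triX 3 2 * triY 3 2 := by
            rw [show triZ 3 2 = (triX 3 2 * triY 3 2)⁻¹ from rfl, inv_inv]
          have h2 : triX 3 2 = (triZ 3 2)⁻¹ * (triY 3 2)⁻¹ := by
            rw [h1]
            group
          show φ (PresentedGroup.of 0) ∈ H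
          rw [show (PresentedGroup.of 0 : Tri 3 2) = triX 3 2 from rfl, h2, map_mul,
            map_inv, map_inv, hφY, hφZ]
          exact H.mul_mem (H.inv_mem hzH) (H.inv_mem hyH)
        · show φ (PresentedGroup.of 1) ∈ H
          rw [show (PresentedGroup.of 1 : Tri 3 2) = triY 3 2 from rfl, hφY]
          exact hyH
      intro wel
      have hmem : wel ∈ Subgroup.closure (Set.range (PresentedGroup.of : Fin 2 → Tri 3 2)) := by
        rw [PresentedGroup.closure_range_of]
        trivial
      exact hle hmem
    have hwH' : ∀ (wel : Tri 3 2) (i k : ℤ),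
        ((i : ZMod 3) = (k : ZMod 3)) ↔ ((φ wel i : ZMod 3) = (φ wel k : ZMod 3)) := fun wel => hwH wel
    let N : Subgroup (Tri 3 2) :=
      { carrier := {w : Tri 3 2 | ((φ w 0 : ℤ) : ZMod 3) = ((0 : ℤ) : ZMod 3)}
        one_mem' := by
          show ((φ 1 0 : ℤ) : ZMod 3) = ((0 : ℤ) : ZMod 3)
          rw [map_one]
          rfl
        mul_mem' := by
          intro a b ha hb
          show ((φ (a * b) 0 : ℤ) : ZMod 3) = ((0 : ℤ) : ZMod 3)
          rw [map_mul, Equiv.Perm.mul_apply]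
          have h1 := (hwH' a (φ b 0) 0).mp hb
          exact h1.trans ha
        inv_mem' := by
          intro a ha
          show ((φ a⁻¹ 0 : ℤ) : ZMod 3) = ((0 : ℤ) : ZMod 3)
          have h1 := (hwH' a⁻¹ (φ a 0) 0).mp ha
          have h2 : φ a⁻¹ (φ a 0) = 0 := by
            rw [← Equiv.Perm.mul_apply, ← map_mul, inv_mul_cancel, map_one]
            rfl
          rw [h2] at h1
          exact h1.symm }
    have hMN : M ≤ N := by
      intro w hw
      rw [memM] at hw
      show ((φ w 0 : ℤ) : ZMod 3) = ((0 : ℤ) : ZMod 3)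
      rw [hw]
    have hMneN : M ≠ N := by
      intro hMeq
      have h1 : triZ 3 2 ^ (3 : ℤ) ∈ N := by
        show ((φ (triZ 3 2 ^ (3:ℤ)) 0 : ℤ) : ZMod 3) = ((0 : ℤ) : ZMod 3)
        rw [hzpow]
        decide
      rw [← hMeq, memM, hzpow] at h1
      norm_num at h1
    have hNtop : N ≠ ⊤ := by
      intro htop
      have h1 : triZ 3 2 ∈ N := htop ▸ Subgroup.mem_top _
      have h2 : ((φ (triZ 3 2) 0 : ℤ) : ZMod 3) = ((0 : ℤ) : ZMod 3) := h1
      rw [hφZ, hz] at h2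
      norm_num at h2
    exact hNtop (hco.2 N (lt_of_le_of_ne hMN hMneN))
  · -- not identically zero → maximal
    intro hnot
    obtain ⟨L, hL, hL1⟩ : ∃ L : ℕ, 1 ≤ L ∧ h L = 1 := by
      push_neg at hnot
      obtain ⟨L, hL, hL1⟩ := hnot
      rcases NeumannMaximalAux.fin2 (h L) with h0 | h0
      · exact absurd h0 hL1
      · exact ⟨L, hL, h0⟩
    constructor
    · intro htop
      have h1 : triZ 3 2 ∈ M := htop ▸ Subgroup.mem_top _
      rw [memM, hφZ, hz] at h1
      norm_num at h1
    intro N hMN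
    have hMle : M ≤ N := le_of_lt hMN
    have key1 : ∀ b : ℤ, (∃ n ∈ N, φ n 0 = b) → triZ 3 2 ^ b ∈ N := by
      rintro b ⟨n, hn, hb⟩
      have h1 : triZ 3 2 ^ (-b) * n ∈ M := by
        rw [memM, map_mul, Equiv.Perm.mul_apply, hb, hzpow]
        ring
      have h2 : triZ 3 2 ^ (-b) ∈ N := by
        have h3 := N.mul_mem (hMle h1) (N.inv_mem hn)
        have he : triZ 3 2 ^ (-b) * n * n⁻¹ = triZ 3 2 ^ (-b) := by group
        rwa [he] at h3
      have h4 := N.inv_mem h2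
      rwa [← zpow_neg, neg_neg] at h4
    let B : AddSubgroup ℤ :=
      { carrier := {b : ℤ | ∃ n ∈ N, φ n 0 = b}
        zero_mem' := ⟨1, N.one_mem, by rw [map_one]; rfl⟩
        add_mem' := by
          rintro a b ⟨n, hn, ha⟩ ⟨n', hn', hb⟩
          refine ⟨triZ 3 2 ^ a * n', N.mul_mem (key1 a ⟨n, hn, ha⟩) hn', ?_⟩
          rw [map_mul, Equiv.Perm.mul_apply, hb, hzpow]
          ring
        neg_mem' := by
          rintro a ⟨n, hn, ha⟩
          refine ⟨(triZ 3 2 ^ a)⁻¹, N.inv_mem (key1 a ⟨n, hn, ha⟩), ?_⟩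
          rw [← zpow_neg, hzpow]
          ring }
    obtain ⟨a, hBa⟩ := Int.subgroup_cyclic B
    have memB : ∀ b : ℤ, (∃ n ∈ N, φ n 0 = b) ↔ a ∣ b := by
      intro b
      constructor
      · intro hb
        have h1 : b ∈ B := hb
        rw [hBa, AddSubgroup.mem_closure_singleton] at h1
        obtain ⟨k, hk⟩ := h1
        exact ⟨k, by rw [← hk, smul_eq_mul]; ring⟩
      · rintro ⟨k, rfl⟩
        have h1 : a * k ∈ B := by
          rw [hBa, AddSubgroup.mem_closure_singleton]
          exact ⟨k, by rw [smul_eq_mul]; ring⟩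
        exact h1
    rcases Nat.lt_or_ge a.natAbs 2 with hdlt | hdge
    · have hcases : a.natAbs = 0 ∨ a.natAbs = 1 := by omega
      rcases hcases with h0 | h1
      · exfalso
        have ha0 : a = 0 := Int.natAbs_eq_zero.mp h0
        obtain ⟨n, hnN, hnM⟩ := SetLike.exists_of_lt hMN
        have h1 : a ∣ φ n 0 := (memB _).mp ⟨n, hnN, rfl⟩
        rw [ha0] at h1
        have h2 := zero_dvd_iff.mp h1
        exact hnM ((memM n).mpr h2)
      · rw [eq_top_iff]
        intro w _
        have hdvd : a ∣ φ w 0 := (Int.isUnit_iff_natAbs_eq.mpr h1).dvd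
        obtain ⟨n, hn, hb⟩ := (memB _).mpr hdvd
        have h2 : n⁻¹ * w ∈ M := by
          rw [memM, map_mul, Equiv.Perm.mul_apply, ← hb, ← Equiv.Perm.mul_apply, ← map_mul,
            inv_mul_cancel, map_one]
          rfl
        have h3 := N.mul_mem hn (hMle h2)
        rwa [mul_inv_cancel_left] at h3
    · exfalso
      set dN : ℕ := a.natAbs with hdN
      have hdvdB : ∀ e : ℤ, (dN : ℤ) ∣ e → (∃ n ∈ N, φ n 0 = e) := by
        intro e he
        exact (memB e).mpr (Int.natAbs_dvd.mp he)
      have WDall : ∀ w : Tri 3 2, ∀ i j : ℤ, (dN : ℤ) ∣ j - i → (dN : ℤ) ∣ φ w j - φ w i := by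
        intro w i j hij
        obtain ⟨n, hn, hb⟩ := hdvdB (j - i) hij
        have hu : triZ 3 2 ^ (-(φ w i)) * w * triZ 3 2 ^ i ∈ M := by
          rw [memM, map_mul, map_mul, Equiv.Perm.mul_apply, Equiv.Perm.mul_apply, hzpow, hzpow,
            zero_add]
          ring
        have h2 : triZ 3 2 ^ (-(φ w i)) * w * triZ 3 2 ^ i * n ∈ N := N.mul_mem (hMle hu) hn
        have h3 : φ (triZ 3 2 ^ (-(φ w i)) * w * triZ 3 2 ^ i * n) 0 = φ w j - φ w i := by
          rw [map_mul, Equiv.Perm.mul_apply, hb, map_mul, map_mul, Equiv.Perm.mul_apply,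
            Equiv.Perm.mul_apply, hzpow, hzpow, show j - i + i = j by ring]
          ring
        have h4 : a ∣ φ w j - φ w i := (memB _).mp ⟨_, h2, h3⟩
        exact Int.natAbs_dvd.mpr h4
      have WDy : ∀ i j : ℤ, ((i : ZMod dN) = (j : ZMod dN)) →
          (((y i : ℤ) : ZMod dN) = ((y j : ℤ) : ZMod dN)) := by
        intro i j hij
        rw [ZMod.intCast_eq_intCast_iff] at hij ⊢
        have h1 : (dN : ℤ) ∣ j - i := Int.ModEq.dvd hij
        have h2 := WDall (triY 3 2) i j h1
        rw [hφY] at h2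
        exact Int.modEq_iff_dvd.mpr h2
      exact NeumannMaximalAux.core dN hdge h g hg (⇑y) hy₁ hy₂ hyA hyB L hL hL1 WDy
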